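/- (Appearance of the vacuum state for small perturbation.) Let u_l < u_r and ρ_l, ρ_r > 0. Then there exists ε₀ > 0 such that for all 0 < ε < ε₀, u_l + ∫₀^{ρ_l} √(ε·p′(ξ)/ξ) dξ < u_r − ∫₀^{ρ_r} √(ε·p′(ξ)/ξ) dξ; equivalently u₁(0) < u₂(0), where u₁(ρ) = u_l + ∫_ρ^{ρ_l} √(ε p′(ξ)/ξ) dξ is the 1-rarefaction curve through (u_l, ρ_l) and u₂(ρ) = u_r − ∫_ρ^{ρ_r} √(ε p′(ξ)/ξ) dξ is the 2-rarefaction curve through (u_r, ρ_r). Moreover u₁(ρ) → u_l uniformly for ρ ∈ [0, ρ_l] and u₂(ρ) → u_r uniformly for ρ ∈ [0, ρ_r] as ε → 0⁺. -/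

import Mathlib

open Real Filter Topology

/-- The pressure-like function `p(ρ) = ∫₀^ρ ξ·e^ξ dξ`. -/
noncomputable def p (ρ : ℝ) : ℝ := ∫ ξ in (0:ℝ)..ρ, ξ * Real.exp ξ

lemma key_int (ε a b : ℝ) :
    (∫ ξ in a..b, Real.sqrt (ε * (ξ * Real.exp ξ) / ξ)) =
      Real.sqrt ε * (2 * Real.exp (b/2) - 2 * Real.exp (a/2)) := by
  have h0 : ∀ᵐ x : ℝ, x ≠ (0:ℝ) := by
    refine MeasureTheory.ae_iff.mpr ?_
    simp
  have hcongr : (∫ ξ in a..b, Real.sqrt (ε * (ξ * Real.exp ξ) / ξ)) =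
      ∫ ξ in a..b, Real.sqrt ε * Real.exp (ξ/2) := by
    apply intervalIntegral.integral_congr_ae
    filter_upwards [h0] with x hx _
    have : ε * (x * Real.exp x) / x = ε * Real.exp x := by field_simp
    rw [this, Real.sqrt_mul' _ (Real.exp_pos x).le]
    congr 1
    rw [show x = x/2 + x/2 by ring, Real.exp_add,
      Real.sqrt_mul_self (Real.exp_pos _).le]
    ring_nf
  rw [hcongr, intervalIntegral.integral_const_mul]
  congr 1
  have : ∀ x ∈ Set.uIcc a b, HasDerivAt (fun y => 2 * Real.exp (y/2)) (Real.exp (x/2)) x := by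
    intro x _
    have h := (((hasDerivAt_id x).div_const 2).exp).const_mul 2
    simp only [id] at h
    rw [show Real.exp (x/2) = 2 * (Real.exp (x/2) * (1/2)) by ring]
    exact h
  rw [intervalIntegral.integral_eq_sub_of_hasDerivAt this
    ((Real.continuous_exp.comp (continuous_id.div_const 2)).intervalIntegrable a b)]

/-- Appearance of the vacuum state for small perturbation: for `u_l < u_r` there is
`ε₀ > 0` so that for `0 < ε < ε₀` the 1-rarefaction curve at `ρ = 0` lies strictly below
the 2-rarefaction curve at `ρ = 0`; moreover both rarefaction curves converge uniformly
to the constants `u_l` and `u_r` respectively as `ε → 0⁺`. -/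
theorem stmt18 (ul ur ρl ρr : ℝ) (hu : ul < ur) (hρl : 0 < ρl) (hρr : 0 < ρr) :
    (∃ ε₀ > (0:ℝ), ∀ ε : ℝ, 0 < ε → ε < ε₀ →
        ul + (∫ ξ in (0:ℝ)..ρl, Real.sqrt (ε * (ξ * Real.exp ξ) / ξ)) <
        ur - (∫ ξ in (0:ℝ)..ρr, Real.sqrt (ε * (ξ * Real.exp ξ) / ξ))) ∧
    TendstoUniformlyOn
      (fun ε ρ => ul + ∫ ξ in ρ..ρl, Real.sqrt (ε * (ξ * Real.exp ξ) / ξ))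
      (fun _ => ul) (𝓝[>] (0:ℝ)) (Set.Icc 0 ρl) ∧
    TendstoUniformlyOn
      (fun ε ρ => ur - ∫ ξ in ρ..ρr, Real.sqrt (ε * (ξ * Real.exp ξ) / ξ))
      (fun _ => ur) (𝓝[>] (0:ℝ)) (Set.Icc 0 ρr) := by
  set A : ℝ := 2 * Real.exp (ρl/2) - 2 * Real.exp (0/2) with hA
  set B : ℝ := 2 * Real.exp (ρr/2) - 2 * Real.exp (0/2) with hB
  have hApos : 0 < A := by
    have := Real.exp_lt_exp.mpr (show (0:ℝ)/2 < ρl/2 by linarith)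
    simp only [hA]; linarith
  have hBpos : 0 < B := by
    have := Real.exp_lt_exp.mpr (show (0:ℝ)/2 < ρr/2 by linarith)
    simp only [hB]; linarith
  refine ⟨⟨((ur - ul)/(A + B))^2, pow_pos (div_pos (by linarith) (by linarith)) 2, fun ε hε hεlt => ?_⟩, ?_, ?_⟩
  · rw [key_int, key_int]
    have hs : Real.sqrt ε < (ur - ul)/(A + B) := by
      have h1 : Real.sqrt ε < Real.sqrt (((ur - ul)/(A + B))^2) :=
        Real.sqrt_lt_sqrt hε.le hεlt
      rwa [Real.sqrt_sq (le_of_lt (div_pos (by linarith) (by linarith)))] at h1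
    have hsnn : 0 ≤ Real.sqrt ε := Real.sqrt_nonneg ε
    have hABpos : 0 < A + B := by linarith
    have hm := mul_lt_mul_of_pos_right hs hABpos
    rw [div_mul_cancel₀ _ (ne_of_gt hABpos)] at hm
    simp only [hA, hB] at hm ⊢
    nlinarith
  · rw [Metric.tendstoUniformlyOn_iff]
    intro δ hδ
    have hmem : Set.Ioo (0:ℝ) ((δ/(A+1))^2) ∈ 𝓝[>] (0:ℝ) :=
      Ioo_mem_nhdsGT_of_mem ⟨le_refl 0, by positivity⟩
    filter_upwards [hmem] with ε hε ρ hρ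
    rw [key_int]
    have hs : Real.sqrt ε < δ/(A+1) := by
      have h1 : Real.sqrt ε < Real.sqrt ((δ/(A+1))^2) := Real.sqrt_lt_sqrt hε.1.le hε.2
      rwa [Real.sqrt_sq (by positivity)] at h1
    have hsnn : 0 ≤ Real.sqrt ε := Real.sqrt_nonneg ε
    have h1 : Real.exp (0/2) ≤ Real.exp (ρ/2) := Real.exp_le_exp.mpr (by linarith [hρ.1])
    have h2 : Real.exp (ρ/2) ≤ Real.exp (ρl/2) := Real.exp_le_exp.mpr (by linarith [hρ.2])
    have hI : 0 ≤ 2 * Real.exp (ρl/2) - 2 * Real.exp (ρ/2) := by linarith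
    have hI2 : 2 * Real.exp (ρl/2) - 2 * Real.exp (ρ/2) ≤ A := by simp only [hA]; linarith
    rw [Real.dist_eq]
    have habs : |ul - (ul + Real.sqrt ε * (2 * Real.exp (ρl/2) - 2 * Real.exp (ρ/2)))|
        = Real.sqrt ε * (2 * Real.exp (ρl/2) - 2 * Real.exp (ρ/2)) := by
      have heq : ul - (ul + Real.sqrt ε * (2 * Real.exp (ρl/2) - 2 * Real.exp (ρ/2)))
          = -(Real.sqrt ε * (2 * Real.exp (ρl/2) - 2 * Real.exp (ρ/2))) := by ring
      rw [heq, abs_neg, abs_of_nonneg (mul_nonneg hsnn hI)]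
    rw [habs]
    calc Real.sqrt ε * (2 * Real.exp (ρl/2) - 2 * Real.exp (ρ/2))
        ≤ Real.sqrt ε * A := by nlinarith
      _ < δ := by
          have := mul_lt_mul_of_pos_right hs (show (0:ℝ) < A + 1 by linarith)
          rw [div_mul_cancel₀] at this
          · nlinarith
          · linarith
  · rw [Metric.tendstoUniformlyOn_iff]
    intro δ hδ
    have hmem : Set.Ioo (0:ℝ) ((δ/(B+1))^2) ∈ 𝓝[>] (0:ℝ) :=
      Ioo_mem_nhdsGT_of_mem ⟨le_refl 0, by positivity⟩
    filter_upwards [hmem] with ε hε ρ hρ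
    rw [key_int]
    have hs : Real.sqrt ε < δ/(B+1) := by
      have h1 : Real.sqrt ε < Real.sqrt ((δ/(B+1))^2) := Real.sqrt_lt_sqrt hε.1.le hε.2
      rwa [Real.sqrt_sq (by positivity)] at h1
    have hsnn : 0 ≤ Real.sqrt ε := Real.sqrt_nonneg ε
    have h1 : Real.exp (0/2) ≤ Real.exp (ρ/2) := Real.exp_le_exp.mpr (by linarith [hρ.1])
    have h2 : Real.exp (ρ/2) ≤ Real.exp (ρr/2) := Real.exp_le_exp.mpr (by linarith [hρ.2])
    have hI : 0 ≤ 2 * Real.exp (ρr/2) - 2 * Real.exp (ρ/2) := by linarith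
    have hI2 : 2 * Real.exp (ρr/2) - 2 * Real.exp (ρ/2) ≤ B := by simp only [hB]; linarith
    rw [Real.dist_eq]
    have habs : |ur - (ur - Real.sqrt ε * (2 * Real.exp (ρr/2) - 2 * Real.exp (ρ/2)))|
        = Real.sqrt ε * (2 * Real.exp (ρr/2) - 2 * Real.exp (ρ/2)) := by
      have heq : ur - (ur - Real.sqrt ε * (2 * Real.exp (ρr/2) - 2 * Real.exp (ρ/2)))
          = Real.sqrt ε * (2 * Real.exp (ρr/2) - 2 * Real.exp (ρ/2)) := by ring
      rw [heq, abs_of_nonneg (mul_nonneg hsnn hI)]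
    rw [habs]
    calc Real.sqrt ε * (2 * Real.exp (ρr/2) - 2 * Real.exp (ρ/2))
        ≤ Real.sqrt ε * B := by nlinarith
      _ < δ := by
          have := mul_lt_mul_of_pos_right hs (show (0:ℝ) < B + 1 by linarith)
          rw [div_mul_cancel₀] at this
          · nlinarith
          · linarith
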